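/- The total number of cyclic subgroups of C_{2^a} × C_{2^b} × C_{2^c} × C_{2^d} with a ≥ b ≥ c ≥ d ≥ 1 equals (15/7)(8^d − 1) + (7/3)·2^d(4^c − 4^d) + 3·2^(c+d)(2^b − 2^c) + (a − b)·2^(b+c+d) + 1. -/

import Mathlib

open Finset AddSubgroup

lemma zmod_killed (n k : ℕ) :
    Nat.card {x : ZMod (2^n) // 2^k • x = 0} = 2 ^ min n k := by
  haveI : NeZero (2^n : ℕ) := ⟨pow_ne_zero _ two_ne_zero⟩
  have hj : min n k ≤ n := min_le_left _ _
  set j := min n k with hjdef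
  have key : ∀ x : ZMod (2^n), 2^k • x = 0 ↔ x ∈ zmultiples ((2^(n-j) : ℕ) : ZMod (2^n)) := by
    intro x
    have hord : addOrderOf x ∣ 2^n := by
      rw [addOrderOf_dvd_iff_nsmul_eq_zero, nsmul_eq_mul, ZMod.natCast_self, zero_mul]
    constructor
    · intro hx
      have h2j : 2^j • x = 0 := by
        have hdvd : addOrderOf x ∣ 2^j := by
          have h1 : addOrderOf x ∣ 2^k := addOrderOf_dvd_of_nsmul_eq_zero hx
          rcases le_total n k with h | h
          · rw [hjdef, min_eq_left h]; exact hord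
          · rw [hjdef, min_eq_right h]; exact h1
        rw [← addOrderOf_dvd_iff_nsmul_eq_zero] at *; exact hdvd
      have hv : (2^n : ℕ) ∣ 2^j * x.val := by
        have : ((2^j * x.val : ℕ) : ZMod (2^n)) = 0 := by
          push_cast
          rw [ZMod.natCast_val, ZMod.cast_id]
          rw [nsmul_eq_mul] at h2j
          push_cast at h2j
          exact h2j
        exact (ZMod.natCast_eq_zero_iff _ _).mp this
      have hv2 : (2^(n-j) : ℕ) ∣ x.val := by
        rcases hv with ⟨t, ht⟩
        have h2n : (2:ℕ)^n = 2^j * 2^(n-j) := by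
          rw [← pow_add, Nat.add_sub_cancel' hj]
        have ht' : 2^j * x.val = 2^j * (2^(n-j) * t) := by
          rw [ht, h2n, mul_assoc]
        exact ⟨t, Nat.eq_of_mul_eq_mul_left (by positivity) ht'⟩
      rcases hv2 with ⟨t, ht⟩
      refine ⟨(t : ℤ), ?_⟩
      show (t : ℤ) • ((2^(n-j) : ℕ) : ZMod (2^n)) = x
      have hxv : x = ((x.val : ℕ) : ZMod (2^n)) := (ZMod.natCast_zmod_val x).symm
      rw [zsmul_eq_mul, hxv, ht]
      push_cast
      ring
    · rintro ⟨t, rfl⟩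
      have hge : n ≤ k + (n - j) := by
        rcases le_total n k with h | h
        · rw [hjdef, min_eq_left h]; omega
        · rw [hjdef, min_eq_right h]; omega
      have hz : (2^k : ℕ) • (((2^(n-j) : ℕ) : ZMod (2^n))) = 0 := by
        rw [nsmul_eq_mul, ← Nat.cast_mul, ZMod.natCast_eq_zero_iff, ← pow_add]
        exact pow_dvd_pow 2 hge
      calc (2^k) • ((t : ℤ) • ((2^(n-j) : ℕ) : ZMod (2^n)))
          = (t : ℤ) • ((2^k : ℕ) • (((2^(n-j) : ℕ) : ZMod (2^n)))) := by
            rw [smul_comm]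
        _ = 0 := by rw [hz, smul_zero]
  have hset : {x : ZMod (2^n) | 2^k • x = 0} = (zmultiples ((2^(n-j) : ℕ) : ZMod (2^n)) : Set _) := by
    ext x; exact key x
  have hcard : Nat.card {x : ZMod (2^n) // 2^k • x = 0}
      = Nat.card (zmultiples ((2^(n-j) : ℕ) : ZMod (2^n))) :=
    Nat.card_congr (Equiv.setCongr hset)
  rw [hcard, Nat.card_zmultiples, ZMod.addOrderOf_coe _ (NeZero.ne _)]
  have hgcd : Nat.gcd (2^n) (2^(n-j)) = 2^(n-j) :=
    Nat.gcd_eq_right (pow_dvd_pow 2 (Nat.sub_le n j))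
  rw [hgcd, Nat.pow_div (Nat.sub_le n j) (by norm_num)]
  congr 1
  omega

lemma killed_prod {A B : Type*} [AddMonoid A] [AddMonoid B] (k : ℕ) :
    Nat.card {x : A × B // k • x = 0} =
      Nat.card {a : A // k • a = 0} * Nat.card {b : B // k • b = 0} := by
  rw [← Nat.card_prod]
  apply Nat.card_congr
  refine Equiv.trans ?_ (Equiv.subtypeProdEquivProd)
  apply Equiv.subtypeEquivRight
  intro x
  simp [Prod.ext_iff]

lemma zmod_smul_zero (m e : ℕ) (h : m ≤ e) (y : ZMod (2^m)) : 2^e • y = 0 := by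
  have hord : addOrderOf y ∣ 2^m := by
    rw [addOrderOf_dvd_iff_nsmul_eq_zero, nsmul_eq_mul, ZMod.natCast_self, zero_mul]
  rw [← addOrderOf_dvd_iff_nsmul_eq_zero]
  exact hord.trans (pow_dvd_pow 2 h)

lemma card_fiber {G : Type*} [AddCommGroup G] [Finite G] (x₀ : G) :
    Nat.card {x : G // zmultiples x = zmultiples x₀} = Nat.totient (addOrderOf x₀) := by
  classical
  cases nonempty_fintype G
  set H := zmultiples x₀ with hH
  haveI : IsAddCyclic H := by
    refine ⟨⟨⟨x₀, mem_zmultiples x₀⟩, ?_⟩⟩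
    rintro ⟨z, hz⟩
    obtain ⟨m, hm⟩ := hz
    exact ⟨m, Subtype.ext (by simpa using hm)⟩
  have e : {x : G // zmultiples x = H} ≃ {y : H // addOrderOf y = Nat.card H} := by
    refine ⟨fun x => ⟨⟨x.1, by have := mem_zmultiples x.1; rwa [x.2] at this⟩, ?_⟩,
      fun y => ⟨y.1.1, ?_⟩, fun x => rfl, fun y => rfl⟩
    · rw [AddSubgroup.addOrderOf_mk, ← Nat.card_zmultiples, x.2]
    · have hle : zmultiples (y.1 : G) ≤ H := zmultiples_le_of_mem y.1.2
      refine AddSubgroup.eq_of_le_of_card_ge hle (le_of_eq ?_)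
      calc Nat.card H = addOrderOf y.1 := y.2.symm
        _ = addOrderOf (y.1 : G) := (AddSubgroup.addOrderOf_coe _).symm
        _ = Nat.card (zmultiples (y.1 : G)) := (Nat.card_zmultiples _).symm
  rw [Nat.card_congr e]
  have hd : Nat.card H ∣ Fintype.card H := by
    rw [Nat.card_eq_fintype_card]
  have h2 := IsAddCyclic.card_addOrderOf_eq_totient (α := H) (d := Nat.card H) hd
  have hcard : Nat.card ↥H = addOrderOf x₀ := Nat.card_zmultiples x₀
  rw [Nat.card_eq_fintype_card, Fintype.card_subtype, ← hcard]
  convert h2 using 2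

/-- The total number of cyclic subgroups of `C_{2^a} × C_{2^b} × C_{2^c} × C_{2^d}` with
`a ≥ b ≥ c ≥ d ≥ 1` is
`(15/7)(8^d - 1) + (7/3)·2^d(4^c - 4^d) + 3·2^(c+d)(2^b - 2^c) + (a-b)·2^(b+c+d) + 1`. -/
theorem total_cyclic_subgroups_four_factors (a b c d : ℕ) (hd : 1 ≤ d) (hdc : d ≤ c)
    (hcb : c ≤ b) (hba : b ≤ a) :
    Set.ncard {H : AddSubgroup (ZMod (2 ^ a) × ZMod (2 ^ b) × ZMod (2 ^ c) × ZMod (2 ^ d)) |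
      ∃ x, H = AddSubgroup.zmultiples x} =
      15 * (8 ^ d - 1) / 7 + 7 * (2 ^ d * (4 ^ c - 4 ^ d)) / 3 +
        3 * 2 ^ (c + d) * (2 ^ b - 2 ^ c) + (a - b) * 2 ^ (b + c + d) + 1 := by
  classical
  haveI : NeZero ((2:ℕ)^a) := ⟨pow_ne_zero _ two_ne_zero⟩
  haveI : NeZero ((2:ℕ)^b) := ⟨pow_ne_zero _ two_ne_zero⟩
  haveI : NeZero ((2:ℕ)^c) := ⟨pow_ne_zero _ two_ne_zero⟩
  haveI : NeZero ((2:ℕ)^d) := ⟨pow_ne_zero _ two_ne_zero⟩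
  set G := ZMod (2 ^ a) × ZMod (2 ^ b) × ZMod (2 ^ c) × ZMod (2 ^ d) with hGdef
  let g : G → AddSubgroup G := fun x => zmultiples x
  -- Step 1: the set is the range of g, hence a Finset image
  have hsetrange : {H : AddSubgroup G | ∃ x, H = zmultiples x} = Set.range g := by
    ext H; constructor
    · rintro ⟨x, rfl⟩; exact ⟨x, rfl⟩
    · rintro ⟨x, rfl⟩; exact ⟨x, rfl⟩
  rw [hsetrange]
  have himg : Set.range g = ↑((univ : Finset G).image g) := by
    rw [Finset.coe_image, Finset.coe_univ, Set.image_univ]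
  rw [himg, Set.ncard_coe_finset]
  -- Step 2: every element has 2-power order at most 2^a
  have hmem : ∀ x : G, ∃ k ≤ a, addOrderOf x = 2^k := by
    intro x
    have h0 : 2^a • x = 0 := by
      have h1 := zmod_smul_zero a a le_rfl x.1
      have h2 := zmod_smul_zero b a hba x.2.1
      have h3 := zmod_smul_zero c a (hcb.trans hba) x.2.2.1
      have h4 := zmod_smul_zero d a (hdc.trans (hcb.trans hba)) x.2.2.2
      exact Prod.ext h1 (Prod.ext h2 (Prod.ext h3 h4))
    have hdvd : addOrderOf x ∣ 2^a := addOrderOf_dvd_of_nsmul_eq_zero h0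
    obtain ⟨k, hk, he⟩ := (Nat.dvd_prime_pow Nat.prime_two).mp hdvd
    exact ⟨k, hk, he⟩
  -- Step 3: partition by order
  have huniv : (univ : Finset G) =
      (range (a+1)).biUnion (fun k => univ.filter (fun x => addOrderOf x = 2^k)) := by
    ext x
    simp only [mem_univ, mem_biUnion, mem_range, mem_filter, true_and, true_iff]
    obtain ⟨k, hk, he⟩ := hmem x
    exact ⟨k, Nat.lt_succ_of_le hk, he⟩
  have hcardval : ∀ (k : ℕ) (H : AddSubgroup G),
      H ∈ (univ.filter (fun x => addOrderOf x = 2^k)).image g → Nat.card H = 2^k := by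
    intro k H hH
    obtain ⟨x, hx, rfl⟩ := Finset.mem_image.mp hH
    rw [Finset.mem_filter] at hx
    rw [Nat.card_zmultiples, hx.2]
  have hdisj : ∀ k ∈ range (a+1), ∀ l ∈ range (a+1), k ≠ l →
      Disjoint ((univ.filter (fun x : G => addOrderOf x = 2^k)).image g)
        ((univ.filter (fun x : G => addOrderOf x = 2^l)).image g) := by
    intro k _ l _ hkl
    rw [Finset.disjoint_left]
    intro H hHk hHl
    exact hkl (Nat.pow_right_injective le_rfl ((hcardval k H hHk).symm.trans (hcardval l H hHl)))
  rw [huniv, Finset.biUnion_image, Finset.card_biUnion hdisj]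
  -- Step 4: each image's cardinality times the totient is the element count
  have hkey : ∀ k : ℕ,
      ((univ.filter (fun x : G => addOrderOf x = 2^k)).image g).card * Nat.totient (2^k)
        = Nat.card {x : G // addOrderOf x = 2^k} := by
    intro k
    have h1 := Finset.card_eq_sum_card_image g (univ.filter (fun x : G => addOrderOf x = 2^k))
    have h2 : ∀ H ∈ (univ.filter (fun x : G => addOrderOf x = 2^k)).image g,
        ((univ.filter (fun x : G => addOrderOf x = 2^k)).filter (fun x => g x = H)).card
          = Nat.totient (2^k) := by
      intro H hH
      obtain ⟨x₀, hx₀, rfl⟩ := Finset.mem_image.mp hH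
      rw [Finset.mem_filter] at hx₀
      have hfe : (univ.filter (fun x : G => addOrderOf x = 2^k)).filter (fun x => g x = g x₀)
          = univ.filter (fun x : G => zmultiples x = zmultiples x₀) := by
        ext x
        simp only [Finset.mem_filter, mem_univ, true_and, g]
        constructor
        · rintro ⟨-, h⟩; exact h
        · intro h
          refine ⟨?_, h⟩
          have := Nat.card_zmultiples x
          rw [h, Nat.card_zmultiples] at this
          rw [← this, hx₀.2]
      rw [hfe, ← hx₀.2]
      rw [← card_fiber x₀]
      rw [Nat.card_eq_fintype_card, Fintype.card_subtype]
    rw [Finset.sum_congr rfl h2, Finset.sum_const, smul_eq_mul] at h1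
    rw [← h1, Nat.card_eq_fintype_card, Fintype.card_subtype]
  -- Step 5: element counts
  have hU : ∀ k : ℕ, Nat.card {x : G // 2^k • x = 0}
      = 2^(min a k + min b k + min c k + min d k) := by
    intro k
    have h : Nat.card {x : ZMod (2^a) × ZMod (2^b) × ZMod (2^c) × ZMod (2^d) // 2^k • x = 0}
        = 2^(min a k + min b k + min c k + min d k) := by
      rw [killed_prod, killed_prod, killed_prod, zmod_killed, zmod_killed, zmod_killed,
        zmod_killed, pow_add, pow_add, pow_add]
      ring
    exact h
  have hN0 : Nat.card {x : G // addOrderOf x = 2^0} = 1 := by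
    rw [Nat.card_eq_fintype_card]
    rw [Fintype.card_eq_one_iff]
    refine ⟨⟨0, by simp⟩, ?_⟩
    rintro ⟨x, hx⟩
    have : x = 0 := by rwa [pow_zero, AddMonoid.addOrderOf_eq_one_iff] at hx
    exact Subtype.ext this
  have hNsucc : ∀ k : ℕ, Nat.card {x : G // addOrderOf x = 2^(k+1)}
      = 2^(min a (k+1) + min b (k+1) + min c (k+1) + min d (k+1))
        - 2^(min a k + min b k + min c k + min d k) := by
    intro k
    rw [← hU (k+1), ← hU k]
    have hsub : (univ.filter (fun x : G => 2^k • x = 0))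
        ⊆ (univ.filter (fun x : G => 2^(k+1) • x = 0)) := by
      intro x hx
      rw [Finset.mem_filter] at hx ⊢
      refine ⟨mem_univ _, ?_⟩
      have : addOrderOf x ∣ 2^k := addOrderOf_dvd_of_nsmul_eq_zero hx.2
      rw [← addOrderOf_dvd_iff_nsmul_eq_zero]
      exact this.trans (pow_dvd_pow 2 (Nat.le_succ k))
    have hTd : univ.filter (fun x : G => addOrderOf x = 2^(k+1))
        = (univ.filter (fun x : G => 2^(k+1) • x = 0)) \ (univ.filter (fun x : G => 2^k • x = 0)) := by
      ext x
      simp only [Finset.mem_filter, Finset.mem_sdiff, mem_univ, true_and]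
      constructor
      · intro h
        constructor
        · rw [← addOrderOf_dvd_iff_nsmul_eq_zero, h]
        · intro hc
          have h1 : addOrderOf x ∣ 2^k := addOrderOf_dvd_of_nsmul_eq_zero hc
          rw [h] at h1
          have := Nat.le_of_dvd (by positivity) h1
          have h2 : (2:ℕ)^k < 2^(k+1) := by
            exact Nat.pow_lt_pow_right one_lt_two (Nat.lt_succ_self k)
          omega
      · rintro ⟨h1, h2⟩
        have hdvd : addOrderOf x ∣ 2^(k+1) := addOrderOf_dvd_of_nsmul_eq_zero h1
        obtain ⟨j, hj, hje⟩ := (Nat.dvd_prime_pow Nat.prime_two).mp hdvd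
        rcases Nat.lt_or_ge j (k+1) with hlt | hge
        · exfalso
          apply h2
          rw [← addOrderOf_dvd_iff_nsmul_eq_zero, hje]
          exact pow_dvd_pow 2 (by omega)
        · rw [hje]; congr 1; omega
    rw [Nat.card_eq_fintype_card, Fintype.card_subtype, hTd, Finset.card_sdiff_of_subset hsub,
      Nat.card_eq_fintype_card, Fintype.card_subtype, Nat.card_eq_fintype_card,
      Fintype.card_subtype]
  -- Step 6: image cardinalities in closed form
  have hc0 : #(Finset.image g (filter (fun x : G => addOrderOf x = 2^0) univ)) = 1 := by
    have h := hkey 0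
    rw [hN0, pow_zero, Nat.totient_one, mul_one] at h
    exact h
  have hcsucc : ∀ k : ℕ,
      #(Finset.image g (filter (fun x : G => addOrderOf x = 2^(k+1)) univ)) * 2^k
      = 2^(min a (k+1) + min b (k+1) + min c (k+1) + min d (k+1))
        - 2^(min a k + min b k + min c k + min d k) := by
    intro k
    have h := hkey (k+1)
    rw [hNsucc k] at h
    have ht : Nat.totient (2^(k+1)) = 2^k := by
      rw [Nat.totient_prime_pow_succ Nat.prime_two]
      norm_num
    rw [ht] at h
    exact h
  have v1 : ∀ k, k < d →
      #(Finset.image g (filter (fun x : G => addOrderOf x = 2^(k+1)) univ)) = 15 * 8^k := by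
    intro k hk
    have h := hcsucc k
    rw [min_eq_right (by omega : k+1 ≤ a), min_eq_right (by omega : k+1 ≤ b),
      min_eq_right (by omega : k+1 ≤ c), min_eq_right (by omega : k+1 ≤ d),
      min_eq_right (by omega : k ≤ a), min_eq_right (by omega : k ≤ b),
      min_eq_right (by omega : k ≤ c), min_eq_right (by omega : k ≤ d)] at h
    apply Nat.eq_of_mul_eq_mul_right (show 0 < 2^k by positivity)
    rw [h, show (k+1)+(k+1)+(k+1)+(k+1) = 4*k+4 by ring, show k+k+k+k = 4*k by ring,
      show (15:ℕ) * 8^k * 2^k = 15 * 2^(4*k) by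
        rw [show (8:ℕ) = 2^3 by norm_num, ← pow_mul, mul_assoc, ← pow_add,
          show 3*k+k = 4*k by ring],
      pow_add]
    set X := (2:ℕ)^(4*k)
    norm_num
    omega
  have v2 : ∀ k, d ≤ k → k < c →
      #(Finset.image g (filter (fun x : G => addOrderOf x = 2^(k+1)) univ)) = 7 * 2^d * 4^k := by
    intro k hk1 hk2
    have h := hcsucc k
    rw [min_eq_right (by omega : k+1 ≤ a), min_eq_right (by omega : k+1 ≤ b),
      min_eq_right (by omega : k+1 ≤ c), min_eq_left (by omega : d ≤ k+1),
      min_eq_right (by omega : k ≤ a), min_eq_right (by omega : k ≤ b),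
      min_eq_right (by omega : k ≤ c), min_eq_left (by omega : d ≤ k)] at h
    apply Nat.eq_of_mul_eq_mul_right (show 0 < 2^k by positivity)
    rw [h, show (k+1)+(k+1)+(k+1)+d = (3*k+d)+3 by ring, show k+k+k+d = 3*k+d by ring,
      show (7:ℕ) * 2^d * 4^k * 2^k = 7 * 2^(3*k+d) by
        rw [show (4:ℕ) = 2^2 by norm_num, ← pow_mul, mul_assoc, mul_assoc, ← pow_add, ← pow_add,
          show d+(2*k+k) = 3*k+d by ring],
      pow_add]
    set X := (2:ℕ)^(3*k+d)
    norm_num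
    omega
  have v3 : ∀ k, c ≤ k → k < b →
      #(Finset.image g (filter (fun x : G => addOrderOf x = 2^(k+1)) univ)) = 3 * 2^(c+d) * 2^k := by
    intro k hk1 hk2
    have h := hcsucc k
    rw [min_eq_right (by omega : k+1 ≤ a), min_eq_right (by omega : k+1 ≤ b),
      min_eq_left (by omega : c ≤ k+1), min_eq_left (by omega : d ≤ k+1),
      min_eq_right (by omega : k ≤ a), min_eq_right (by omega : k ≤ b),
      min_eq_left (by omega : c ≤ k), min_eq_left (by omega : d ≤ k)] at h
    apply Nat.eq_of_mul_eq_mul_right (show 0 < 2^k by positivity)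
    rw [h, show (k+1)+(k+1)+c+d = (2*k+c+d)+2 by ring, show k+k+c+d = 2*k+c+d by ring,
      show (3:ℕ) * 2^(c+d) * 2^k * 2^k = 3 * 2^(2*k+c+d) by
        rw [mul_assoc, mul_assoc, ← pow_add, ← pow_add, show c+d+(k+k) = 2*k+c+d by ring],
      pow_add]
    set X := (2:ℕ)^(2*k+c+d)
    norm_num
    omega
  have v4 : ∀ k, b ≤ k → k < a →
      #(Finset.image g (filter (fun x : G => addOrderOf x = 2^(k+1)) univ)) = 2^(b+c+d) := by
    intro k hk1 hk2
    have h := hcsucc k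
    rw [min_eq_right (by omega : k+1 ≤ a), min_eq_left (by omega : b ≤ k+1),
      min_eq_left (by omega : c ≤ k+1), min_eq_left (by omega : d ≤ k+1),
      min_eq_right (by omega : k ≤ a), min_eq_left (by omega : b ≤ k),
      min_eq_left (by omega : c ≤ k), min_eq_left (by omega : d ≤ k)] at h
    apply Nat.eq_of_mul_eq_mul_right (show 0 < 2^k by positivity)
    rw [h, show (k+1)+b+c+d = (k+b+c+d)+1 by ring,
      show (2:ℕ)^(b+c+d) * 2^k = 2^(k+b+c+d) by rw [← pow_add, show b+c+d+k = k+b+c+d by ring],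
      pow_add]
    set X := (2:ℕ)^(k+b+c+d)
    norm_num
    omega
  -- Step 7: sum up
  rw [Finset.sum_range_succ', hc0]
  rw [Finset.range_eq_Ico,
    ← Finset.sum_Ico_consecutive _ (Nat.zero_le b) hba,
    ← Finset.sum_Ico_consecutive _ (Nat.zero_le c) hcb,
    ← Finset.sum_Ico_consecutive _ (Nat.zero_le d) hdc]
  have hs1 : ∑ k ∈ Ico 0 d, #(Finset.image g (filter (fun x : G => addOrderOf x = 2^(k+1)) univ))
      = 15 * (8^d - 1) / 7 := by
    rw [Finset.sum_congr rfl (fun k hk => v1 k (by simp [Finset.mem_Ico] at hk; omega))]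
    rw [← Finset.range_eq_Ico, ← Finset.mul_sum, Nat.geomSum_eq (by norm_num) d]
    rw [Nat.mul_div_assoc 15 (by simpa using Nat.sub_dvd_pow_sub_pow 8 1 d)]
  have hs2 : ∑ k ∈ Ico d c, #(Finset.image g (filter (fun x : G => addOrderOf x = 2^(k+1)) univ))
      = 7 * (2^d * (4^c - 4^d)) / 3 := by
    rw [Finset.sum_congr rfl (fun k hk => v2 k (by simp [Finset.mem_Ico] at hk; omega)
      (by simp [Finset.mem_Ico] at hk; omega))]
    rw [← Finset.mul_sum]
    obtain ⟨p, hp⟩ : (3:ℕ) ∣ 4^c - 1 := by simpa using Nat.sub_dvd_pow_sub_pow 4 1 c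
    obtain ⟨q, hq⟩ : (3:ℕ) ∣ 4^d - 1 := by simpa using Nat.sub_dvd_pow_sub_pow 4 1 d
    have h4c : 1 ≤ (4:ℕ)^c := Nat.one_le_pow _ _ (by norm_num)
    have h4d : 1 ≤ (4:ℕ)^d := Nat.one_le_pow _ _ (by norm_num)
    have h4 : (4:ℕ)^d ≤ 4^c := Nat.pow_le_pow_right (by norm_num) hdc
    have hIco : ∑ k ∈ Ico d c, (4:ℕ)^k = p - q := by
      have hr : ∀ n : ℕ, ∑ k ∈ range n, (4:ℕ)^k = (4^n - 1)/3 := by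
        intro n
        rw [Nat.geomSum_eq (by norm_num) n]
      have hco : (∑ k ∈ range d, (4:ℕ)^k) + (∑ k ∈ Ico d c, (4:ℕ)^k)
          = ∑ k ∈ range c, (4:ℕ)^k := by
        have h := Finset.sum_Ico_consecutive (fun k => (4:ℕ)^k) (Nat.zero_le d) hdc
        simp only [← Finset.range_eq_Ico] at h
        exact h
      have hpd : ∑ k ∈ range d, (4:ℕ)^k = q := by
        rw [hr, hq]; exact Nat.mul_div_cancel_left q (by norm_num)
      have hpc : ∑ k ∈ range c, (4:ℕ)^k = p := by
        rw [hr, hp]; exact Nat.mul_div_cancel_left p (by norm_num)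
      omega
    rw [hIco]
    have hdiff : (4:ℕ)^c - 4^d = 3*(p-q) := by omega
    rw [hdiff, show (2:ℕ)^d * (3*(p-q)) = 3*(2^d*(p-q)) by ring,
      Nat.mul_div_assoc 7 (dvd_mul_right 3 _),
      Nat.mul_div_cancel_left _ (by norm_num : 0 < 3), ← mul_assoc]
  have hs3 : ∑ k ∈ Ico c b, #(Finset.image g (filter (fun x : G => addOrderOf x = 2^(k+1)) univ))
      = 3 * 2^(c+d) * (2^b - 2^c) := by
    rw [Finset.sum_congr rfl (fun k hk => v3 k (by simp [Finset.mem_Ico] at hk; omega)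
      (by simp [Finset.mem_Ico] at hk; omega))]
    rw [← Finset.mul_sum]
    have hr : ∀ n : ℕ, ∑ k ∈ range n, (2:ℕ)^k = 2^n - 1 := by
      intro n
      rw [Nat.geomSum_eq (by norm_num) n]
      norm_num
    have hco : (∑ k ∈ range c, (2:ℕ)^k) + (∑ k ∈ Ico c b, (2:ℕ)^k)
        = ∑ k ∈ range b, (2:ℕ)^k := by
      have h := Finset.sum_Ico_consecutive (fun k => (2:ℕ)^k) (Nat.zero_le c) hcb
      simp only [← Finset.range_eq_Ico] at h
      exact h
    have h2c : 1 ≤ (2:ℕ)^c := Nat.one_le_pow _ _ (by norm_num)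
    have h2b : 1 ≤ (2:ℕ)^b := Nat.one_le_pow _ _ (by norm_num)
    have hIco : ∑ k ∈ Ico c b, (2:ℕ)^k = 2^b - 2^c := by
      rw [hr c, hr b] at hco
      omega
    rw [hIco]
  have hs4 : ∑ k ∈ Ico b a, #(Finset.image g (filter (fun x : G => addOrderOf x = 2^(k+1)) univ))
      = (a - b) * 2^(b+c+d) := by
    rw [Finset.sum_congr rfl (fun k hk => v4 k (by simp [Finset.mem_Ico] at hk; omega)
      (by simp [Finset.mem_Ico] at hk; omega))]
    rw [Finset.sum_const, Nat.card_Ico, smul_eq_mul]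
  rw [hs1, hs2, hs3, hs4]
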